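/- arXiv:2501.13267 — 2 statements merged into one kernel-verified Lean document; each statement's English description precedes it below -/
import Mathlib

section
/- Let h ≥ 2 and c ≥ 1 be integers. Assume that for every positive integer h' < h and every h'-regular pair (d';a') = (d_1',…,d_{c'}'; a_0',…,a_{n'}') with c' ≤ c, c' ≤ n' and a_i' ∤ h' for all i, one has δ(d';a') ≥ F^{h'}(a_0',…,a_{n'}'). Let (d;a) = (d_1,…,d_c; a_0,…,a_n) be an h-regular pair with c ≤ n and a_i ∤ h for all i, and suppose there exist weights a_{i_1},…,a_{i_k} with g := gcd(a_{i_1},…,a_{i_k}) > 1 such that δ(d;a) ≥ δ(d(g);a(g)) and the number of degrees divisible by g is strictly smaller than the number of weights divisible by g. Then δ(d;a) ≥ F^h(a_0,…,a_n). -/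
open Finset

/-- The amplitude `δ` of the (sub)pair given by the degrees `d` indexed by `D`
and the weights `a` indexed by `A`. -/
def deltaOn {ι κ : Type*} (D : Finset ι) (d : ι → ℕ) (A : Finset κ) (a : κ → ℕ) : ℤ :=
  (∑ j ∈ D, (d j : ℤ)) - ∑ i ∈ A, (a i : ℤ)

/-- The amplitude of a full pair `(d;a)`. -/
def deltaPair {ι κ : Type*} [Fintype ι] [Fintype κ] (d : ι → ℕ) (a : κ → ℕ) : ℤ :=
  deltaOn univ d univ a

/-- `h`-regularity of the (sub)pair given by the degrees `d` indexed by `D` and the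
weights `a` indexed by `A`: for every nonempty subset `I ⊆ A` of the weight indices with
`a_I := gcd_{i ∈ I} a i > 1`, either there are `|I|` pairwise distinct degree indices
`p ∈ D` with `a_I ∣ d p`, or `a_I ∣ h`. -/
def IsHRegularOn {ι κ : Type*} (h : ℕ) (D : Finset ι) (d : ι → ℕ)
    (A : Finset κ) (a : κ → ℕ) : Prop :=
  ∀ I : Finset κ, I ⊆ A → I.Nonempty → 1 < I.gcd a →
    (∃ P : Finset ι, P ⊆ D ∧ P.card = I.card ∧ ∀ j ∈ P, I.gcd a ∣ d j) ∨ I.gcd a ∣ h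

/-- `h`-regularity of a full pair `(d;a)`. -/
def IsHRegularPair {ι κ : Type*} [Fintype ι] [Fintype κ] (h : ℕ) (d : ι → ℕ)
    (a : κ → ℕ) : Prop :=
  IsHRegularOn h univ d univ a

/-- The generalised `1/h`-Frobenius number `F^h` of the weights indexed by `A`.
Letting `g` be the gcd of the weights, this is the largest integer `z` divisible by
`lcm g h` that is not a nonnegative integral combination of the weights; this agrees
with the renormalised definition `F^h = g * F^{h / gcd (g,h)} (a/g)`.  For `g = 1`
it is the largest multiple of `h` that is not a nonnegative integral combination of
the weights (so it equals `-h` if every positive multiple of `h` is such a combination),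
and `frobOn 1 A a` is the ordinary Frobenius number `F` (so `F = -1` if some weight
equals `1`). -/
noncomputable def frobOn {κ : Type*} (h : ℕ) (A : Finset κ) (a : κ → ℕ) : ℤ :=
  sSup {z : ℤ | ((Nat.lcm (A.gcd a) h : ℕ) : ℤ) ∣ z ∧
    ¬ ∃ x : κ → ℕ, ((∑ i ∈ A, x i * a i : ℕ) : ℤ) = z}

/-- The generalised `1/h`-Frobenius number `F^h` of a full tuple of weights. -/
noncomputable def frobNum {κ : Type*} [Fintype κ] (h : ℕ) (a : κ → ℕ) : ℤ :=
  frobOn h univ a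

private lemma bezout_finset {κ : Type*} [DecidableEq κ] (s : Finset κ) (f : κ → ℕ) :
    ∃ u : κ → ℤ, ∑ i ∈ s, u i * (f i : ℤ) = ((s.gcd f : ℕ) : ℤ) := by
  induction s using Finset.induction_on with
  | empty => exact ⟨0, by simp⟩
  | @insert a s ha ih =>
    obtain ⟨u, hu⟩ := ih
    set m := s.gcd f with hm
    refine ⟨fun i => if i = a then Nat.gcdA (f a) m else Nat.gcdB (f a) m * u i, ?_⟩
    rw [Finset.sum_insert ha, Finset.gcd_insert]
    have hsum : ∑ i ∈ s, (if i = a then Nat.gcdA (f a) m else Nat.gcdB (f a) m * u i) * (f i : ℤ)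
        = Nat.gcdB (f a) m * ∑ i ∈ s, u i * (f i : ℤ) := by
      rw [Finset.mul_sum]
      refine Finset.sum_congr rfl fun i hi => ?_
      rw [if_neg (by rintro rfl; exact ha hi)]; ring
    rw [hsum, hu]
    have hb : (fun i => if i = a then Nat.gcdA (f a) m else Nat.gcdB (f a) m * u i) a
        = Nat.gcdA (f a) m := by simp
    rw [hb]
    have hgg : GCDMonoid.gcd (f a) (s.gcd f) = Nat.gcd (f a) m := rfl
    rw [hgg, Nat.gcd_eq_gcd_ab]
    ring

private lemma repr_large {κ : Type*} (s : Finset κ) (f : κ → ℕ) (h1 : s.gcd f = 1) :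
    ∃ N : ℕ, ∀ m : ℕ, N ≤ m → ∃ x : κ → ℕ, ∑ i ∈ s, x i * f i = m := by
  classical
  obtain ⟨u, hu⟩ := bezout_finset s f
  rw [h1] at hu
  push_cast at hu
  set x : κ → ℕ := fun i => (u i).toNat with hx
  set y : κ → ℕ := fun i => (-u i).toNat with hy
  have hxy : ∀ i, (x i : ℤ) - y i = u i := by
    intro i; simp only [hx, hy]; omega
  set A : ℕ := ∑ i ∈ s, x i * f i with hA
  set B : ℕ := ∑ i ∈ s, y i * f i with hB
  have hAB : (A : ℤ) - B = 1 := by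
    rw [hA, hB]
    push_cast
    rw [← Finset.sum_sub_distrib, ← hu]
    refine Finset.sum_congr rfl fun i _ => ?_
    rw [← hxy i]
    ring
  have hABn : A = B + 1 := by
    have : (A : ℤ) = (B : ℤ) + 1 := by linarith
    exact_mod_cast this
  by_cases hB0 : B = 0
  · refine ⟨0, fun m _ => ⟨fun i => m * x i, ?_⟩⟩
    have : ∑ i ∈ s, (m * x i) * f i = m * A := by
      rw [hA, Finset.mul_sum]
      exact Finset.sum_congr rfl fun i _ => by ring
    rw [this, hABn, hB0]
    omega
  · refine ⟨B * B, fun m hm => ?_⟩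
    have hBpos : 0 < B := Nat.pos_of_ne_zero hB0
    set q := m / B with hq
    set r := m % B with hr
    have hrB : r < B := Nat.mod_lt _ hBpos
    have hBq : B ≤ q := (Nat.le_div_iff_mul_le hBpos).mpr hm
    have hrq : r ≤ q := le_trans (le_of_lt hrB) hBq
    refine ⟨fun i => (q - r) * y i + r * x i, ?_⟩
    have hs : ∑ i ∈ s, ((q - r) * y i + r * x i) * f i = (q - r) * B + r * A := by
      rw [hA, hB, Finset.mul_sum, Finset.mul_sum, ← Finset.sum_add_distrib]
      exact Finset.sum_congr rfl fun i _ => by ring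
    rw [hs, hABn]
    obtain ⟨e, he⟩ : ∃ e, q = r + e := ⟨q - r, by omega⟩
    have hm' : B * q + r = m := Nat.div_add_mod m B
    calc (q - r) * B + r * (B + 1) = e * B + r * (B + 1) := by rw [he, Nat.add_sub_cancel_left]
      _ = B * (r + e) + r := by ring
      _ = m := by rw [← he, hm']

private lemma gcd_mul_left_nat {κ : Type*} (s : Finset κ) (f : κ → ℕ) (b : ℕ) :
    s.gcd (fun i => b * f i) = b * s.gcd f := by
  classical
  induction s using Finset.induction_on with
  | empty => simp
  | @insert a s ha ih =>
    rw [Finset.gcd_insert, Finset.gcd_insert, ih]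
    exact Nat.gcd_mul_left b (f a) (s.gcd f)

private lemma sum_orderIso {α M : Type*} [LinearOrder α] [AddCommMonoid M] (s : Finset α)
    {k : ℕ} (h : s.card = k) (F : α → M) :
    ∑ j : Fin k, F ↑(s.orderIsoOfFin h j) = ∑ p ∈ s, F p := by
  rw [← Finset.sum_coe_sort s F]
  exact Fintype.sum_equiv (s.orderIsoOfFin h).toEquiv _ _ (fun j => rfl)

private lemma gcd_orderIso {α : Type*} [LinearOrder α] (s : Finset α) {k : ℕ}
    (h : s.card = k) (f : α → ℕ) :
    (Finset.univ.gcd fun j : Fin k => f ↑(s.orderIsoOfFin h j)) = s.gcd f := by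
  apply Nat.dvd_antisymm
  · apply Finset.dvd_gcd
    intro p hp
    have := Finset.gcd_dvd (Finset.mem_univ ((s.orderIsoOfFin h).symm ⟨p, hp⟩))
      (f := fun j : Fin k => f ↑(s.orderIsoOfFin h j))
    simpa using this
  · apply Finset.dvd_gcd
    intro j _
    exact Finset.gcd_dvd (s.orderIsoOfFin h j).2

/-- **Lemma 4.9(iii) (reduction to smaller regularity index).**
Assume Conjecture 4.11 holds for all `h'`-regular pairs of codimension at most `c` with
`h' < h`.  If `(d;a)` is an `h`-regular pair with `c ≤ n`, `aᵢ ∤ h` for all `i`, and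
there are weights with `g := gcd(a_{i₁},…,a_{i_k}) > 1` such that
`δ(d;a) ≥ δ(d(g);a(g))` and `|d(g)| < |a(g)|`, then `δ(d;a) ≥ F^h(a₀,…,aₙ)`. -/
theorem reduction_lemma_iii (h c : ℕ) (hh : 2 ≤ h) (hc : 1 ≤ c)
    (IH : ∀ (h' c' n' : ℕ), 0 < h' → h' < h → 1 ≤ c' → c' ≤ c → c' ≤ n' →
      ∀ (d' : Fin c' → ℕ) (a' : Fin (n' + 1) → ℕ),
        (∀ j, 0 < d' j) → (∀ i, 0 < a' i) → IsHRegularPair h' d' a' →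
        (∀ i, ¬ a' i ∣ h') → deltaPair d' a' ≥ frobNum h' a')
    (n : ℕ) (hcn : c ≤ n)
    (d : Fin c → ℕ) (a : Fin (n + 1) → ℕ)
    (hd : ∀ j, 0 < d j) (ha : ∀ i, 0 < a i)
    (hreg : IsHRegularPair h d a) (hnd : ∀ i, ¬ a i ∣ h)
    (S : Finset (Fin (n + 1))) (hS : S.Nonempty)
    (g : ℕ) (hgdef : g = S.gcd a) (hg : 1 < g)
    (hdelta : deltaPair d a
        ≥ deltaOn (Finset.univ.filter (fun j => g ∣ d j)) d
            (Finset.univ.filter (fun i => g ∣ a i)) a)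
    (hcard : (Finset.univ.filter (fun j => g ∣ d j)).card
        < (Finset.univ.filter (fun i : Fin (n + 1) => g ∣ a i)).card) :
    deltaPair d a ≥ frobNum h a := by
  classical
  set Dg := Finset.univ.filter (fun j => g ∣ d j) with hDgdef
  set Ag := Finset.univ.filter (fun i : Fin (n + 1) => g ∣ a i) with hAgdef
  have hAgne : Ag.Nonempty := Finset.card_pos.mp (by omega)
  set g₁ := Ag.gcd a with hg₁def
  have hgg₁ : g ∣ g₁ := Finset.dvd_gcd fun i hi => (Finset.mem_filter.mp hi).2
  have hg₁pos : 0 < g₁ := by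
    obtain ⟨i, hi⟩ := hAgne
    exact Nat.pos_of_dvd_of_pos (Finset.gcd_dvd hi) (ha i)
  have hg₁1 : 1 < g₁ := lt_of_lt_of_le hg (Nat.le_of_dvd hg₁pos hgg₁)
  have hg₁h : g₁ ∣ h := by
    rcases hreg Ag (Finset.subset_univ _) hAgne hg₁1 with ⟨P, -, hPcard, hPdvd⟩ | hdvd
    · exfalso
      have hPD : P ⊆ Dg := fun p hp =>
        Finset.mem_filter.mpr ⟨Finset.mem_univ _, dvd_trans hgg₁ (hPdvd p hp)⟩
      have := Finset.card_le_card hPD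
      omega
    · exact hdvd
  set A₁ := Finset.univ.filter (fun i : Fin (n + 1) => g₁ ∣ a i) with hA₁def
  set D₁ := Finset.univ.filter (fun j : Fin c => g₁ ∣ d j) with hD₁def
  have hA₁Ag : A₁ = Ag := by
    ext i
    constructor
    · intro hi
      rw [hA₁def] at hi; rw [hAgdef]
      exact Finset.mem_filter.mpr
        ⟨Finset.mem_univ _, dvd_trans hgg₁ (Finset.mem_filter.mp hi).2⟩
    · intro hi
      rw [hA₁def]
      exact Finset.mem_filter.mpr ⟨Finset.mem_univ _, Finset.gcd_dvd hi⟩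
  have hD₁Dg : D₁ ⊆ Dg := by
    intro p hp
    rw [hD₁def] at hp; rw [hDgdef]
    exact Finset.mem_filter.mpr
      ⟨Finset.mem_univ _, dvd_trans hgg₁ (Finset.mem_filter.mp hp).2⟩
  have hA₁gcd : A₁.gcd a = g₁ := by rw [hA₁Ag]
  have hD₁ne : D₁.Nonempty := by
    obtain ⟨i0, hi0⟩ := hAgne
    have hai0 : 1 < a i0 := by
      have h1 : a i0 ≠ 1 := fun he => hnd i0 (he ▸ one_dvd h)
      have := ha i0
      omega
    have h1 : 1 < Finset.gcd {i0} a := by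
      rw [Finset.gcd_singleton]
      simpa using hai0
    rcases hreg {i0} (Finset.subset_univ _) ⟨i0, Finset.mem_singleton_self i0⟩ h1 with
      ⟨P, -, hPcard, hPdvd⟩ | hdvd
    · have hPne : P.Nonempty := Finset.card_pos.mp (by rw [hPcard]; simp)
      obtain ⟨p, hp⟩ := hPne
      refine ⟨p, ?_⟩
      rw [hD₁def]
      refine Finset.mem_filter.mpr ⟨Finset.mem_univ _, ?_⟩
      have hdp : Finset.gcd {i0} a ∣ d p := hPdvd p hp
      rw [Finset.gcd_singleton] at hdp
      have hg₁a : g₁ ∣ a i0 := Finset.gcd_dvd hi0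
      exact dvd_trans hg₁a (by simpa using hdp)
    · exfalso
      apply hnd i0
      rw [Finset.gcd_singleton] at hdvd
      simpa using hdvd
  set M := D₁.card with hM
  have hM1 : 1 ≤ M := by
    have := Finset.card_pos.mpr hD₁ne
    omega
  have hMc : M ≤ c := by
    have := Finset.card_le_card (Finset.subset_univ D₁)
    simpa using this
  have hMN : M < A₁.card := by
    rw [hA₁Ag]
    exact lt_of_le_of_lt (Finset.card_le_card hD₁Dg) hcard
  set n'' := A₁.card - 1 with hn''
  have hA₁card : A₁.card = n'' + 1 := by omega
  have hD₁card : D₁.card = M := hM.symm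
  set eD := D₁.orderIsoOfFin hD₁card with heD
  set eA := A₁.orderIsoOfFin hA₁card with heA
  have hdD : ∀ j, g₁ ∣ d ↑(eD j) := by
    intro j
    have hmem : ↑(eD j) ∈ Finset.univ.filter (fun j : Fin c => g₁ ∣ d j) := (eD j).2
    exact (Finset.mem_filter.mp hmem).2
  have haA : ∀ i, g₁ ∣ a ↑(eA i) := by
    intro i
    have hmem : ↑(eA i) ∈ Finset.univ.filter (fun i : Fin (n + 1) => g₁ ∣ a i) := (eA i).2
    exact (Finset.mem_filter.mp hmem).2
  set d'' : Fin M → ℕ := fun j => d ↑(eD j) / g₁ with hd''def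
  set a'' : Fin (n'' + 1) → ℕ := fun i => a ↑(eA i) / g₁ with ha''def
  have hdmul : ∀ j, g₁ * d'' j = d ↑(eD j) := fun j => Nat.mul_div_cancel' (hdD j)
  have hamul : ∀ i, g₁ * a'' i = a ↑(eA i) := fun i => Nat.mul_div_cancel' (haA i)
  set h' := h / g₁ with hh'def
  have hhg₁ : g₁ * h' = h := Nat.mul_div_cancel' hg₁h
  have hh'pos : 0 < h' := Nat.div_pos (Nat.le_of_dvd (by omega) hg₁h) hg₁pos
  have hh'lt : h' < h := by
    have h3 : 2 * h' ≤ h := by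
      rw [← hhg₁]
      exact Nat.mul_le_mul_right h' hg₁1
    omega
  have hd''pos : ∀ j, 0 < d'' j := by
    intro j
    rcases Nat.eq_zero_or_pos (d'' j) with h0 | h0
    · exfalso
      have hm2 := hdmul j
      rw [h0, Nat.mul_zero] at hm2
      have := hd ↑(eD j)
      omega
    · exact h0
  have ha''pos : ∀ i, 0 < a'' i := by
    intro i
    rcases Nat.eq_zero_or_pos (a'' i) with h0 | h0
    · exfalso
      have hm2 := hamul i
      rw [h0, Nat.mul_zero] at hm2
      have := ha ↑(eA i)
      omega
    · exact h0
  have hreg'' : IsHRegularPair h' d'' a'' := by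
    intro I hIu hIne hIgcd
    set t := I.gcd a'' with ht
    set I' := I.image (fun j => (↑(eA j) : Fin (n + 1))) with hI'
    have hinj : Function.Injective (fun j : Fin (n'' + 1) => (↑(eA j) : Fin (n + 1))) :=
      fun x y hxy => eA.injective (Subtype.ext hxy)
    have hI'card : I'.card = I.card := Finset.card_image_of_injective _ hinj
    have hI'ne : I'.Nonempty := hIne.image _
    have hgcdI : I.gcd (fun j => a ↑(eA j)) = g₁ * t := by
      have hfe : (fun j : Fin (n'' + 1) => a ↑(eA j)) = fun j => g₁ * a'' j := by
        funext j; rw [← hamul j]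
      rw [hfe, gcd_mul_left_nat]
    have hI'gcd : I'.gcd a = g₁ * t := by
      apply Nat.dvd_antisymm
      · rw [← hgcdI]
        apply Finset.dvd_gcd
        intro j hj
        exact Finset.gcd_dvd (Finset.mem_image_of_mem _ hj)
      · apply Finset.dvd_gcd
        intro p hp
        rw [hI'] at hp
        obtain ⟨j, hj, rfl⟩ := Finset.mem_image.mp hp
        rw [← hgcdI]
        exact Finset.gcd_dvd hj
    have hI'gt : 1 < I'.gcd a := by
      rw [hI'gcd]
      calc 1 < t := hIgcd
        _ ≤ g₁ * t := Nat.le_mul_of_pos_left t hg₁pos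
    rcases hreg I' (Finset.subset_univ _) hI'ne hI'gt with ⟨P, -, hPcard, hPdvd⟩ | hdvd
    · left
      have hPD₁ : P ⊆ D₁ := by
        intro p hp
        rw [hD₁def]
        refine Finset.mem_filter.mpr ⟨Finset.mem_univ _, ?_⟩
        have hdp := hPdvd p hp
        rw [hI'gcd] at hdp
        exact dvd_trans (Dvd.intro t rfl) hdp
      refine ⟨Finset.univ.filter (fun j : Fin M => ↑(eD j) ∈ P), Finset.subset_univ _, ?_, ?_⟩
      · rw [← hI'card, ← hPcard]
        apply Finset.card_bij (fun j _ => (↑(eD j) : Fin c))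
        · intro j hj; exact (Finset.mem_filter.mp hj).2
        · intro x hx y hy hxy; exact eD.injective (Subtype.ext hxy)
        · intro p hp
          refine ⟨eD.symm ⟨p, hPD₁ hp⟩, ?_, ?_⟩
          · refine Finset.mem_filter.mpr ⟨Finset.mem_univ _, ?_⟩
            simpa using hp
          · simp
      · intro j hj
        have hjP : ↑(eD j) ∈ P := (Finset.mem_filter.mp hj).2
        have hdp := hPdvd _ hjP
        rw [hI'gcd] at hdp
        obtain ⟨e, he⟩ := hdp
        refine ⟨e, ?_⟩
        have h2 : g₁ * d'' j = g₁ * (t * e) := by rw [hdmul j, he]; ring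
        exact Nat.eq_of_mul_eq_mul_left hg₁pos h2
    · right
      rw [hI'gcd] at hdvd
      have h2 : g₁ * t ∣ g₁ * h' := by rw [hhg₁]; exact hdvd
      exact (mul_dvd_mul_iff_left (by omega : g₁ ≠ 0)).mp h2
  have hnd'' : ∀ i, ¬ a'' i ∣ h' := by
    intro i hdvd
    apply hnd ↑(eA i)
    rw [← hamul i, ← hhg₁]
    exact mul_dvd_mul_left g₁ hdvd
  have hMn'' : M ≤ n'' := by omega
  have hIH := IH h' M n'' hh'pos hh'lt hM1 hMc hMn'' d'' a'' hd''pos ha''pos hreg'' hnd''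
  -- gcd of a'' is 1
  have hgA : (Finset.univ.gcd fun j : Fin (n'' + 1) => a ↑(eA j)) = g₁ := by
    rw [heA, gcd_orderIso A₁ hA₁card a]
    exact hA₁gcd
  have hgcd1 : (Finset.univ.gcd a'') = 1 := by
    have h2 : Finset.univ.gcd (fun j : Fin (n'' + 1) => g₁ * a'' j)
        = g₁ * Finset.univ.gcd a'' := gcd_mul_left_nat _ _ _
    have h3 : (fun j : Fin (n'' + 1) => g₁ * a'' j) = fun j => a ↑(eA j) :=
      funext fun j => hamul j
    rw [h3, hgA] at h2
    exact Nat.eq_of_mul_eq_mul_left hg₁pos (by rw [Nat.mul_one]; exact h2.symm)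
  -- the Frobenius set for a''
  have hbdd : BddAbove {z : ℤ | ((h' : ℕ) : ℤ) ∣ z ∧
      ¬ ∃ x : Fin (n'' + 1) → ℕ, ((∑ i ∈ Finset.univ, x i * a'' i : ℕ) : ℤ) = z} := by
    obtain ⟨Nb, hNb⟩ := repr_large Finset.univ a'' hgcd1
    refine ⟨(Nb : ℤ), fun z hz => ?_⟩
    by_contra hlt
    push_neg at hlt
    obtain ⟨x, hx⟩ := hNb z.toNat (by omega)
    exact hz.2 ⟨x, by rw [hx]; omega⟩
  have hfrob'' : frobNum h' a'' = sSup {z : ℤ | ((h' : ℕ) : ℤ) ∣ z ∧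
      ¬ ∃ x : Fin (n'' + 1) → ℕ, ((∑ i ∈ Finset.univ, x i * a'' i : ℕ) : ℤ) = z} := by
    unfold frobNum frobOn
    rw [hgcd1, Nat.lcm_one_left]
  have hkey : ∀ w : ℤ, ((h' : ℕ) : ℤ) ∣ w →
      (¬ ∃ x : Fin (n'' + 1) → ℕ, ((∑ i ∈ Finset.univ, x i * a'' i : ℕ) : ℤ) = w) →
      w ≤ deltaPair d'' a'' := by
    intro w hdvd hnr
    have hmem : w ∈ {z : ℤ | ((h' : ℕ) : ℤ) ∣ z ∧
        ¬ ∃ x : Fin (n'' + 1) → ℕ, ((∑ i ∈ Finset.univ, x i * a'' i : ℕ) : ℤ) = z} :=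
      ⟨hdvd, hnr⟩
    calc w ≤ sSup {z : ℤ | ((h' : ℕ) : ℤ) ∣ z ∧
        ¬ ∃ x : Fin (n'' + 1) → ℕ, ((∑ i ∈ Finset.univ, x i * a'' i : ℕ) : ℤ) = z} :=
          le_csSup hbdd hmem
      _ = frobNum h' a'' := hfrob''.symm
      _ ≤ deltaPair d'' a'' := hIH
  -- delta scaling
  have hdsum : (g₁ : ℤ) * ∑ j : Fin M, (d'' j : ℤ) = ∑ p ∈ D₁, (d p : ℤ) := by
    rw [Finset.mul_sum, ← sum_orderIso D₁ hD₁card (fun p => (d p : ℤ)), ← heD]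
    exact Finset.sum_congr rfl fun j _ => by exact_mod_cast congrArg (Nat.cast (R := ℤ)) (hdmul j)
  have hasum : (g₁ : ℤ) * ∑ i : Fin (n'' + 1), (a'' i : ℤ) = ∑ p ∈ A₁, (a p : ℤ) := by
    rw [Finset.mul_sum, ← sum_orderIso A₁ hA₁card (fun p => (a p : ℤ)), ← heA]
    exact Finset.sum_congr rfl fun j _ => by exact_mod_cast congrArg (Nat.cast (R := ℤ)) (hamul j)
  have hdeltascale : (g₁ : ℤ) * deltaPair d'' a'' = deltaOn D₁ d A₁ a := by
    rw [deltaPair, deltaOn, deltaOn, mul_sub, hdsum, hasum]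
  have hmono : deltaOn D₁ d A₁ a ≤ deltaOn Dg d Ag a := by
    rw [deltaOn, deltaOn, hA₁Ag]
    have hsle : ∑ j ∈ D₁, (d j : ℤ) ≤ ∑ j ∈ Dg, (d j : ℤ) :=
      Finset.sum_le_sum_of_subset_of_nonneg hD₁Dg (fun j _ _ => Int.natCast_nonneg _)
    linarith
  have hGg₁ : (Finset.univ : Finset (Fin (n + 1))).gcd a ∣ g₁ := by
    rw [hg₁def]
    exact Finset.dvd_gcd fun i _ => Finset.gcd_dvd (Finset.mem_univ i)
  have hlcm : Nat.lcm ((Finset.univ : Finset (Fin (n + 1))).gcd a) h = h :=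
    Nat.dvd_antisymm (Nat.lcm_dvd (dvd_trans hGg₁ hg₁h) dvd_rfl) (Nat.dvd_lcm_right _ _)
  rw [ge_iff_le]
  unfold frobNum frobOn
  rw [hlcm]
  apply csSup_le
  · refine ⟨-(h : ℤ), dvd_neg.mpr dvd_rfl, ?_⟩
    rintro ⟨x, hx⟩
    have h0 : (0 : ℤ) ≤ ((∑ i ∈ Finset.univ, x i * a i : ℕ) : ℤ) := Int.natCast_nonneg _
    rw [hx] at h0
    have : (2 : ℤ) ≤ (h : ℤ) := by exact_mod_cast hh
    linarith
  · intro z hz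
    obtain ⟨⟨m0, hm0⟩, hnrep⟩ := hz
    set w := ((h' : ℕ) : ℤ) * m0 with hw
    have hzw : z = (g₁ : ℤ) * w := by
      rw [hm0, hw, ← hhg₁]
      push_cast
      ring
    have hwdvd : ((h' : ℕ) : ℤ) ∣ w := Dvd.intro m0 rfl
    have hwnr : ¬ ∃ x : Fin (n'' + 1) → ℕ,
        ((∑ i ∈ Finset.univ, x i * a'' i : ℕ) : ℤ) = w := by
      rintro ⟨x, hx⟩
      apply hnrep
      set x' : Fin (n + 1) → ℕ :=
        fun p => if hp : p ∈ A₁ then x (eA.symm ⟨p, hp⟩) else 0 with hx'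
      refine ⟨x', ?_⟩
      have hsum1 : ∑ p ∈ Finset.univ, x' p * a p = ∑ p ∈ A₁, x' p * a p :=
        (Finset.sum_subset (Finset.subset_univ A₁)
          (fun p _ hp => by rw [hx']; simp [dif_neg hp])).symm
      have hsum2 : ∑ p ∈ A₁, x' p * a p = ∑ j : Fin (n'' + 1), x' ↑(eA j) * a ↑(eA j) := by
        rw [← sum_orderIso A₁ hA₁card (fun p => x' p * a p), ← heA]
      have hterm : ∀ j, x' ↑(eA j) * a ↑(eA j) = x j * (g₁ * a'' j) := by
        intro j
        have h1 : x' ↑(eA j) = x j := by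
          rw [hx']
          simp only [dif_pos (eA j).2]
          congr 1
          rw [Subtype.coe_eta]
          exact eA.symm_apply_apply j
        rw [h1, hamul j]
      have hfinal : ∑ p ∈ Finset.univ, x' p * a p
          = g₁ * (∑ i ∈ Finset.univ, x i * a'' i) := by
        rw [hsum1, hsum2, Finset.mul_sum]
        exact Finset.sum_congr rfl fun j _ => by rw [hterm j]; ring
      calc ((∑ p ∈ Finset.univ, x' p * a p : ℕ) : ℤ)
          = (g₁ : ℤ) * ((∑ i ∈ Finset.univ, x i * a'' i : ℕ) : ℤ) := by
            rw [hfinal]; push_cast; ring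
        _ = (g₁ : ℤ) * w := by rw [hx]
        _ = z := hzw.symm
    have hwle : w ≤ deltaPair d'' a'' := hkey w hwdvd hwnr
    calc z = (g₁ : ℤ) * w := hzw
      _ ≤ (g₁ : ℤ) * deltaPair d'' a'' :=
          mul_le_mul_of_nonneg_left hwle (by positivity)
      _ = deltaOn D₁ d A₁ a := hdeltascale
      _ ≤ deltaOn Dg d Ag a := hmono
      _ ≤ deltaPair d a := hdelta
end

section
/- Let (d;a) = (d_1,…,d_c; a_0,…,a_n) be a regular pair with c < n. Let p and q be distinct primes, both dividing d_1, and suppose that the pair obtained from (d(p);a(p)) by replacing the degree d_1 with d_1/q is again regular. Then the pair (d';a) = (d_1/p, d_1/q, d_2,…,d_c; a_0,…,a_n), of codimension c+1, is regular and satisfies δ(d';a) < δ(d;a). -/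
open Finset

/-- **(Section 6) Lowering the amplitude by splitting a degree.**
Let `(d;a)` be a regular pair with `c < n`, let `p ≠ q` be primes dividing `d₁`, and
suppose the pair obtained from `(d(p);a(p))` by replacing the degree `d₁` with `d₁/q`
is again regular.  Then the codimension `c+1` pair
`(d';a) = (d₁/p, d₁/q, d₂,…,d_c; a₀,…,aₙ)` is regular and `δ(d';a) < δ(d;a)`. -/
theorem split_degree_lowers_amplitude (c n : ℕ) (hc : 0 < c) (hcn : c < n)
    (d : Fin c → ℕ) (a : Fin (n + 1) → ℕ)
    (hd : ∀ j, 0 < d j) (ha : ∀ i, 0 < a i)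
    (hreg : IsHRegularPair 1 d a)
    (p q : ℕ) (hp : p.Prime) (hq : q.Prime) (hpq : p ≠ q)
    (hpd : p ∣ d ⟨0, hc⟩) (hqd : q ∣ d ⟨0, hc⟩)
    (hsub : IsHRegularOn 1 (Finset.univ.filter (fun j => p ∣ d j))
        (Function.update d ⟨0, hc⟩ (d ⟨0, hc⟩ / q))
        (Finset.univ.filter (fun i => p ∣ a i)) a) :
    IsHRegularPair 1
        (Fin.cons (d ⟨0, hc⟩ / p) (Function.update d ⟨0, hc⟩ (d ⟨0, hc⟩ / q))) a
    ∧ deltaPair (Fin.cons (d ⟨0, hc⟩ / p) (Function.update d ⟨0, hc⟩ (d ⟨0, hc⟩ / q))) a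
        < deltaPair d a := by
  set z : Fin c := ⟨0, hc⟩ with hz
  set d0 : ℕ := d z with hd0
  have hcop : Nat.Coprime p q := (Nat.coprime_primes hp hq).mpr hpq
  have hpqd : p * q ∣ d0 := Nat.Coprime.mul_dvd_of_dvd_of_dvd hcop hpd hqd
  have hd0pos : 0 < d0 := hd z
  have hkey : d0 / p + d0 / q < d0 := by
    obtain ⟨k, hk⟩ := hpqd
    have hk0 : 0 < k := by
      rcases Nat.eq_zero_or_pos k with h | h
      · rw [h, mul_zero] at hk; omega
      · exact h
    have hp2 := hp.two_le
    have hq2 := hq.two_le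
    have h1 : d0 / p = q * k := by
      rw [hk, mul_assoc, Nat.mul_div_cancel_left _ hp.pos]
    have h2 : d0 / q = p * k := by
      rw [hk, mul_right_comm, Nat.mul_div_cancel _ hq.pos]
    rw [h1, h2, hk]
    have h3 : 3 ≤ p ∨ 3 ≤ q := by omega
    have hlt : q + p < p * q := by rcases h3 with h3 | h3 <;> nlinarith
    calc q * k + p * k = (q + p) * k := by ring
      _ < p * q * k := by
          exact Nat.mul_lt_mul_of_lt_of_le hlt (le_refl k) hk0
  constructor
  · intro I _ hI hgcd
    set g := I.gcd a with hg
    left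
    by_cases hpg : p ∣ g
    · have hIsub : I ⊆ Finset.univ.filter (fun i => p ∣ a i) := by
        intro i hi
        simp only [Finset.mem_filter, Finset.mem_univ, true_and]
        exact hpg.trans (Finset.gcd_dvd hi)
      rcases hsub I hIsub hI hgcd with ⟨P, _, hPcard, hPdvd⟩ | habs
      · refine ⟨P.image Fin.succ, Finset.subset_univ _, ?_, ?_⟩
        · rw [Finset.card_image_of_injective _ (Fin.succ_injective c), hPcard]
        · intro j hj
          rcases Finset.mem_image.mp hj with ⟨k, hk, rfl⟩
          simpa using hPdvd k hk
      · exact absurd (Nat.le_of_dvd one_pos habs) (by omega)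
    · have hgp : Nat.Coprime g p := Nat.Coprime.symm (hp.coprime_iff_not_dvd.mpr hpg)
      rcases hreg I (Finset.subset_univ I) hI hgcd with ⟨P, _, hPcard, hPdvd⟩ | habs
      · by_cases h0 : z ∈ P
        · have hgd0 : g ∣ d0 := hPdvd z h0
          have hgdp : g ∣ d0 / p := by
            refine hgp.dvd_of_dvd_mul_right ?_
            rwa [Nat.div_mul_cancel hpd]
          refine ⟨insert 0 ((P.erase z).image Fin.succ), Finset.subset_univ _, ?_, ?_⟩
          · rw [Finset.card_insert_of_notMem, Finset.card_image_of_injective _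
              (Fin.succ_injective c), Finset.card_erase_of_mem h0, hPcard]
            · have : 1 ≤ I.card := Finset.card_pos.mpr hI
              omega
            · intro h
              rcases Finset.mem_image.mp h with ⟨k, _, hk⟩
              exact Fin.succ_ne_zero k hk
          · intro j hj
            rcases Finset.mem_insert.mp hj with rfl | hj
            · simpa using hgdp
            · rcases Finset.mem_image.mp hj with ⟨k, hk, rfl⟩
              have hkz : k ≠ z := Finset.ne_of_mem_erase hk
              have : g ∣ d k := hPdvd k (Finset.mem_of_mem_erase hk)
              simpa [Fin.cons_succ, Function.update_of_ne hkz] using this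
        · refine ⟨P.image Fin.succ, Finset.subset_univ _, ?_, ?_⟩
          · rw [Finset.card_image_of_injective _ (Fin.succ_injective c), hPcard]
          · intro j hj
            rcases Finset.mem_image.mp hj with ⟨k, hk, rfl⟩
            have hkz : k ≠ z := fun h => h0 (h ▸ hk)
            simpa [Fin.cons_succ, Function.update_of_ne hkz] using hPdvd k hk
      · exact absurd (Nat.le_of_dvd one_pos habs) (by omega)
  · have hsum : (∑ j : Fin (c + 1),
        (Fin.cons (d0 / p) (Function.update d z (d0 / q)) : Fin (c + 1) → ℕ) j)
        < ∑ j : Fin c, d j := by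
      rw [Fin.sum_cons, Finset.sum_update_of_mem (Finset.mem_univ z),
        ← Finset.sum_erase_add _ _ (Finset.mem_univ z), Finset.sdiff_singleton_eq_erase]
      have : d0 = d z := hd0
      linarith
    simp only [deltaPair, deltaOn, ← Nat.cast_sum]
    exact sub_lt_sub_right (Nat.cast_lt.mpr hsum) _
end
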